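/- For a > 0, B > 0, T > 0, and τ ∈ [0, T], the following exact identity holds: ∫₀^T (T-u)( e^{-2au} + e^{-a|u+τ|} e^{-a|u-τ|} ) du = ( Tτ + T/(2a) - τ²/2 - τ/(2a) - 1/(4a²) ) e^{-2aτ} + (1/(2a²)) e^{-2aT} + T/(2a) - 1/(4a²). -/

import Mathlib

open Real intervalIntegral

theorem exp_cov_integral (a B T τ : ℝ) (ha : 0 < a) (hB : 0 < B) (hT : 0 < T)
    (hτ : τ ∈ Set.Icc 0 T) :
    ∫ u in (0:ℝ)..T, (T - u) * (Real.exp (-(2 * a * u)) +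
        Real.exp (-(a * |u + τ|)) * Real.exp (-(a * |u - τ|))) =
      (T * τ + T / (2 * a) - τ ^ 2 / 2 - τ / (2 * a) - 1 / (4 * a ^ 2)) *
          Real.exp (-(2 * a * τ)) +
        (1 / (2 * a ^ 2)) * Real.exp (-(2 * a * T)) + T / (2 * a) - 1 / (4 * a ^ 2) := by
  obtain ⟨hτ0, hτT⟩ := hτ
  have ha2 : (2 * a) ≠ 0 := by positivity
  have ha4 : (4 * a ^ 2) ≠ 0 := by positivity
  set f : ℝ → ℝ := fun u => (T - u) * (Real.exp (-(2 * a * u)) +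
      Real.exp (-(a * |u + τ|)) * Real.exp (-(a * |u - τ|))) with hf
  have hcont : Continuous f := by fun_prop
  -- antiderivative of (T - u) * exp(-(2a u))
  set F : ℝ → ℝ := fun u => ((u - T) / (2 * a) + 1 / (4 * a ^ 2)) * Real.exp (-(2 * a * u))
    with hFdef
  have hF : ∀ u : ℝ, HasDerivAt F ((T - u) * Real.exp (-(2 * a * u))) u := by
    intro u
    have h1 : HasDerivAt (fun u : ℝ => (u - T) / (2 * a) + 1 / (4 * a ^ 2)) (1 / (2 * a)) u := by
      exact (((hasDerivAt_id u).sub_const T).div_const (2 * a)).add_const (1 / (4 * a ^ 2))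
    have h2 : HasDerivAt (fun u : ℝ => Real.exp (-(2 * a * u)))
        (-(2 * a) * Real.exp (-(2 * a * u))) u := by
      have : HasDerivAt (fun u : ℝ => -(2 * a * u)) (-(2 * a)) u := by
        simpa using ((hasDerivAt_id u).const_mul (2 * a)).fun_neg
      simpa [mul_comm] using this.exp
    refine (h1.fun_mul h2).congr_deriv ?_
    field_simp
    ring
  have hsplit : ∫ u in (0:ℝ)..T, f u = (∫ u in (0:ℝ)..τ, f u) + ∫ u in τ..T, f u :=
    (integral_add_adjacent_intervals (hcont.intervalIntegrable _ _)
      (hcont.intervalIntegrable _ _)).symm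
  set H : ℝ → ℝ := fun u => F u + (T * u - u ^ 2 / 2) * Real.exp (-(2 * a * τ)) with hHdef
  set H2 : ℝ → ℝ := fun u => 2 * F u with hH2def
  have hI1 : ∫ u in (0:ℝ)..τ, f u = H τ - H 0 := by
    have hcongr : ∫ u in (0:ℝ)..τ, f u =
        ∫ u in (0:ℝ)..τ, ((T - u) * Real.exp (-(2 * a * u)) +
          (T - u) * Real.exp (-(2 * a * τ))) := by
      apply integral_congr
      intro u hu
      rw [Set.uIcc_of_le hτ0] at hu
      obtain ⟨hu0, huτ⟩ := hu
      have h1 : |u + τ| = u + τ := abs_of_nonneg (by linarith)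
      have h2 : |u - τ| = τ - u := by rw [abs_sub_comm]; exact abs_of_nonneg (by linarith)
      simp only [hf, h1, h2, ← Real.exp_add]
      ring_nf
    rw [hcongr]
    apply integral_eq_sub_of_hasDerivAt
    · intro u hu
      have hG : HasDerivAt (fun u : ℝ => (T * u - u ^ 2 / 2) * Real.exp (-(2 * a * τ)))
          ((T - u) * Real.exp (-(2 * a * τ))) u := by
        have : HasDerivAt (fun u : ℝ => T * u - u ^ 2 / 2) (T - u) u := by
          have h1 := (hasDerivAt_id u).const_mul T
          have h2 := ((hasDerivAt_pow 2 u).div_const 2)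
          simpa using h1.fun_sub h2
        simpa using this.mul_const (Real.exp (-(2 * a * τ)))
      exact (hF u).add hG
    · apply Continuous.intervalIntegrable
      fun_prop
  have hI2 : ∫ u in τ..T, f u = H2 T - H2 τ := by
    have hcongr : ∫ u in τ..T, f u =
        ∫ u in τ..T, (2 * ((T - u) * Real.exp (-(2 * a * u)))) := by
      apply integral_congr
      intro u hu
      rw [Set.uIcc_of_le hτT] at hu
      obtain ⟨huτ, huT⟩ := hu
      have h1 : |u + τ| = u + τ := abs_of_nonneg (by linarith)
      have h2 : |u - τ| = u - τ := abs_of_nonneg (by linarith)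
      simp only [hf, h1, h2, ← Real.exp_add]
      ring_nf
    rw [hcongr]
    apply integral_eq_sub_of_hasDerivAt
    · intro u hu
      simpa [hH2def] using (hF u).const_mul 2
    · apply Continuous.intervalIntegrable
      fun_prop
  rw [hsplit, hI1, hI2]
  simp only [hHdef, hH2def, hFdef]
  simp only [mul_zero, neg_zero, Real.exp_zero]
  field_simp
  ring
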